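/- Let A, B, C be affinely independent points of the Euclidean plane ℝ², let T be the (closed) triangle with vertices A, B, C, and let r_A, r_B, r_C ≥ ρ > 0. Suppose that the closed discs of centers A, B, C and radii r_A, r_B, r_C have pairwise disjoint interiors, and that for each vertex the distance from that vertex to the line through the other two vertices is at least the radius of the disc centered at it (i.e. dist(A, line BC) ≥ r_A, dist(B, line AC) ≥ r_B, dist(C, line AB) ≥ r_C). Then the area of T is at least (1/2)πρ². -/

import Mathlib

open MeasureTheory Metric Real EuclideanGeometry

section AuxSector
open Set
open scoped RealInnerProductSpace


noncomputable def secSet (ρ : ℝ) (c : ℂ) : Set ℂ :=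
  {z | ‖z‖ ≤ ρ ∧ 0 ≤ z.im ∧ 0 ≤ z.re * c.im - z.im * c.re}

lemma secSet_isClosed (ρ : ℝ) (c : ℂ) : IsClosed (secSet ρ c) := by
  have h1 : IsClosed {z : ℂ | ‖z‖ ≤ ρ} :=
    isClosed_le continuous_norm continuous_const
  have h2 : IsClosed {z : ℂ | 0 ≤ z.im} := isClosed_le continuous_const Complex.continuous_im
  have h3 : IsClosed {z : ℂ | 0 ≤ z.re * c.im - z.im * c.re} :=
    isClosed_le continuous_const
      ((Complex.continuous_re.mul continuous_const).sub (Complex.continuous_im.mul continuous_const))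
  exact (h1.inter (h2.inter h3))

lemma secSet_subset (ρ p : ℝ) (hρ : 0 < ρ) (hp : 0 < p) (c : ℂ) (hc : 0 < c.im)
    (H : ∀ t : ℝ, 0 ≤ t → t ≤ 1 → ρ ≤ ‖(1-t) * p + t * c‖) :
    secSet ρ c ⊆ convexHull ℝ {0, (p:ℂ), c} := by
  rintro z ⟨hz1, hz2, hz3⟩
  set a : ℝ := (z.re * c.im - z.im * c.re) / (p * c.im) with ha_def
  set b : ℝ := z.im / c.im with hb_def
  have ha : 0 ≤ a := div_nonneg hz3 (by positivity)
  have hb : 0 ≤ b := div_nonneg hz2 hc.le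
  have hre : a * p + b * c.re = z.re := by
    rw [ha_def, hb_def]; field_simp; ring
  have him : b * c.im = z.im := by
    rw [hb_def]; field_simp
  have hz : z = a * p + b * c := by
    apply Complex.ext <;> simp only [Complex.add_re, Complex.add_im, Complex.mul_re,
      Complex.mul_im, Complex.ofReal_re, Complex.ofReal_im, zero_mul, mul_zero, sub_zero,
      zero_add, add_zero] <;> linarith
  have hP0 : (0:ℂ) ∈ convexHull ℝ ({0, (p:ℂ), c} : Set ℂ) :=
    subset_convexHull ℝ _ (by simp)
  rcases eq_or_lt_of_le (by positivity : (0:ℝ) ≤ a + b) with hs | hs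
  · have ha0 : a = 0 := by linarith
    have hb0 : b = 0 := by linarith
    rw [hz, ha0, hb0]
    simpa using hP0
  · set s := a + b with hs_def
    set t := b / s with ht_def
    have ht0 : 0 ≤ t := div_nonneg hb hs.le
    have ht1 : t ≤ 1 := by
      rw [ht_def, div_le_one hs]; linarith
    set P : ℂ := (1-t) * p + t * c with hP_def
    have hPseg : P ∈ segment ℝ ((p:ℝ):ℂ) c := by
      refine ⟨1 - t, t, by linarith, ht0, by ring, ?_⟩
      rw [Complex.real_smul, Complex.real_smul, hP_def]
      push_cast; ring
    have hPmem : P ∈ convexHull ℝ ({0, (p:ℂ), c} : Set ℂ) :=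
      (convex_convexHull ℝ _).segment_subset
        (subset_convexHull ℝ _ (by simp)) (subset_convexHull ℝ _ (by simp)) hPseg
    have h2 : s * t = b := by rw [ht_def, mul_div_cancel₀ _ hs.ne']
    have h1 : s * (1 - t) = a := by rw [mul_sub, mul_one, h2, hs_def]; ring
    have h1c : (s:ℂ) * (1 - (t:ℂ)) = (a:ℂ) := by
      have := congrArg (fun x : ℝ => (x : ℂ)) h1
      push_cast at this; exact this
    have h2c : (s:ℂ) * (t:ℂ) = (b:ℂ) := by
      have := congrArg (fun x : ℝ => (x : ℂ)) h2
      push_cast at this; exact this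
    have hzP : z = s * P := by
      rw [hz, hP_def, ← h1c, ← h2c]; push_cast; ring
    have hPρ : ρ ≤ ‖P‖ := H t ht0 ht1
    have hs1 : s ≤ 1 := by
      have habs : ‖z‖ = s * ‖P‖ := by
        rw [hzP]; simp [map_mul, Complex.norm_real, abs_of_pos hs]
      nlinarith [norm_nonneg z, norm_nonneg P]
    have hzseg : z ∈ segment ℝ (0:ℂ) P := by
      refine ⟨1 - s, s, by linarith, hs.le, by ring, ?_⟩
      rw [smul_zero, zero_add, Complex.real_smul]
      exact hzP.symm
    exact (convex_convexHull ℝ _).segment_subset hP0 hPmem hzseg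




lemma secSet_volume (ρ : ℝ) (hρ : 0 < ρ) (c : ℂ) (hc : 0 < c.im) :
    ENNReal.ofReal (Real.arccos (c.re / ‖c‖) * ρ^2 / 2) ≤ volume (secSet ρ c) := by
  have hcne : c ≠ 0 := fun h => by simp [h] at hc
  have habs : 0 < ‖c‖ := norm_pos_iff.mpr hcne
  have hsq : ‖c‖ ^ 2 = c.re ^ 2 + c.im ^ 2 := by
    rw [Complex.sq_norm, Complex.normSq_apply]; ring
  have hrelt : |c.re| < ‖c‖ := Complex.abs_re_lt_norm.2 hc.ne'
  have hx1 : (-1 : ℝ) < c.re / ‖c‖ := by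
    rw [lt_div_iff₀ habs]; cases' abs_lt.1 hrelt with h _; linarith
  have hx2 : c.re / ‖c‖ < 1 := by
    rw [div_lt_one habs]; cases' abs_lt.1 hrelt with _ h; linarith
  set θ := Real.arccos (c.re / ‖c‖) with hθ_def
  have hcos : Real.cos θ = c.re / ‖c‖ := Real.cos_arccos hx1.le hx2.le
  have hsin : Real.sin θ = c.im / ‖c‖ := by
    rw [hθ_def, Real.sin_arccos]
    rw [show 1 - (c.re / ‖c‖)^2 = (c.im / ‖c‖)^2 by
      rw [div_pow, div_pow, eq_div_iff (pow_pos habs 2).ne', sub_mul,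
        div_mul_cancel₀ _ (pow_pos habs 2).ne', hsq]; ring]
    exact Real.sqrt_sq (div_nonneg hc.le habs.le)
  have hθ0 : 0 < θ := Real.arccos_pos.2 hx2
  have hθπ : θ < π := lt_of_le_of_ne (Real.arccos_le_pi _)
    (fun h => absurd (Real.arccos_eq_pi.1 h) (by push_neg; linarith))
  have MS : MeasurableSet (secSet ρ c) := (secSet_isClosed ρ c).measurableSet
  have hsub : secSet ρ c ⊆ closedBall 0 ρ := by
    rintro z ⟨h1, _, _⟩
    simpa [mem_closedBall, Complex.dist_eq] using h1
  have hfin : volume (secSet ρ c) ≠ ⊤ :=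
    ((measure_mono hsub).trans_lt measure_closedBall_lt_top).ne
  set E : Set (ℝ × ℝ) := Ioc 0 ρ ×ˢ Icc 0 θ with hE_def
  have hEsub : E ⊆ polarCoord.target := by
    rw [polarCoord_target]
    exact Set.prod_mono Ioc_subset_Ioi_self
      (fun x hx => ⟨by linarith [hx.1, Real.pi_pos], lt_of_le_of_lt hx.2 hθπ⟩)
  have ME : MeasurableSet E := measurableSet_Ioc.prod measurableSet_Icc
  have hpt : ∀ p ∈ polarCoord.target,
      p.1 • (secSet ρ c).indicator (fun _ => (1:ℝ)) (Complex.polarCoord.symm p)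
        = E.indicator (fun q => q.1) p := by
    rintro ⟨r, φ⟩ hp
    rw [polarCoord_target] at hp
    obtain ⟨hr, hφ⟩ := hp
    simp only [mem_Ioi] at hr
    simp only [mem_Ioo] at hφ
    set z := Complex.polarCoord.symm (r, φ) with hz_def
    have hz' : z = Complex.ofReal (r * Real.cos φ) + Complex.ofReal (r * Real.sin φ) * Complex.I := by
      rw [hz_def, Complex.polarCoord_symm_apply]; push_cast; ring
    have hzre : z.re = r * Real.cos φ := by
      rw [hz']
      simp only [Complex.add_re, Complex.ofReal_re, Complex.mul_re, Complex.I_re, Complex.I_im,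
        Complex.ofReal_im, Complex.add_im, Complex.mul_im]
      ring
    have hzim : z.im = r * Real.sin φ := by
      rw [hz']
      simp only [Complex.add_re, Complex.ofReal_re, Complex.mul_re, Complex.I_re, Complex.I_im,
        Complex.ofReal_im, Complex.add_im, Complex.mul_im]
      ring
    have hzabs : ‖z‖ = r := by
      rw [hz_def, Complex.norm_polarCoord_symm]; exact abs_of_pos hr
    have hkey : z.re * c.im - z.im * c.re = r * ‖c‖ * Real.sin (θ - φ) := by
      rw [hzre, hzim, Real.sin_sub, hsin, hcos]
      field_simp
    have hiff : z ∈ secSet ρ c ↔ (r, φ) ∈ E := by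
      constructor
      · rintro ⟨h1, h2, h3⟩
        rw [hzabs] at h1
        rw [hzim] at h2
        have hsinφ : 0 ≤ Real.sin φ := nonneg_of_mul_nonneg_right h2 hr
        have hφ0 : 0 ≤ φ := by
          by_contra hneg
          push_neg at hneg
          exact absurd hsinφ (not_le.2 (Real.sin_neg_of_neg_of_neg_pi_lt hneg hφ.1))
        have hsinθφ : 0 ≤ Real.sin (θ - φ) := by
          rw [hkey] at h3
          exact nonneg_of_mul_nonneg_right h3 (mul_pos hr habs)
        have hφθ : φ ≤ θ := by
          by_contra hgt
          push_neg at hgt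
          have h1' : θ - φ < 0 := by linarith
          have h2' : -π < θ - φ := by linarith
          exact absurd hsinθφ (not_le.2 (Real.sin_neg_of_neg_of_neg_pi_lt h1' h2'))
        exact Set.mem_prod.2 ⟨⟨hr, h1⟩, hφ0, hφθ⟩
      · intro hmem
        obtain ⟨hr', hφ'⟩ := Set.mem_prod.1 hmem
        refine ⟨by rw [hzabs]; exact hr'.2, ?_, ?_⟩
        · rw [hzim]
          exact mul_nonneg hr.le
            (Real.sin_nonneg_of_nonneg_of_le_pi hφ'.1 (by linarith [hφ'.2]))
        · rw [hkey]
          exact mul_nonneg (mul_nonneg hr.le habs.le)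
            (Real.sin_nonneg_of_nonneg_of_le_pi (by linarith [hφ'.2])
              (by linarith [hφ'.1]))
    by_cases hmem : z ∈ secSet ρ c
    · rw [Set.indicator_of_mem hmem, Set.indicator_of_mem (hiff.1 hmem)]
      simp
    · rw [Set.indicator_of_notMem hmem, Set.indicator_of_notMem (fun h => hmem (hiff.2 h))]
      simp
  have hCV := Complex.integral_comp_polarCoord_symm ((secSet ρ c).indicator (fun _ => (1:ℝ)))
  have hRHS : ∫ z, (secSet ρ c).indicator (fun _ => (1:ℝ)) z = (volume (secSet ρ c)).toReal := by
    rw [MeasureTheory.integral_indicator_const (1:ℝ) MS]; simp [Measure.real]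
  have hLHS : (∫ p in polarCoord.target,
      p.1 • (secSet ρ c).indicator (fun _ => (1:ℝ)) (Complex.polarCoord.symm p))
      = ρ^2/2 * θ := by
    rw [setIntegral_congr_fun polarCoord.open_target.measurableSet hpt]
    rw [setIntegral_indicator ME, Set.inter_eq_self_of_subset_right hEsub]
    have : (∫ p in E, p.1) = (∫ x in Ioc (0:ℝ) ρ, x) * ∫ y in Icc (0:ℝ) θ, (1:ℝ) := by
      rw [hE_def, Measure.volume_eq_prod]
      rw [← setIntegral_prod_mul (fun x : ℝ => x) (fun _ : ℝ => (1:ℝ))]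
      simp
    rw [this]
    rw [← intervalIntegral.integral_of_le hρ.le, integral_id, setIntegral_const]
    simp [Real.volume_Icc, ENNReal.toReal_ofReal hθ0.le, hθ0.le]
  have hvol : (volume (secSet ρ c)).toReal = ρ^2/2 * θ := by
    rw [← hRHS, ← hCV, hLHS]
  rw [← ENNReal.ofReal_toReal hfin, hvol]
  apply ENNReal.ofReal_le_ofReal
  linarith




lemma vertex_sector_bound (A B C : EuclideanSpace ℝ (Fin 2))
    (hcol : ¬Collinear ℝ ({A, B, C} : Set (EuclideanSpace ℝ (Fin 2))))
    (ρ : ℝ) (hρ : 0 < ρ)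
    (halt : ∀ P ∈ (affineSpan ℝ ({B, C} : Set (EuclideanSpace ℝ (Fin 2))) : Set _),
      ρ ≤ dist A P) :
    ENNReal.ofReal (EuclideanGeometry.angle B A C * ρ^2 / 2)
      ≤ volume (convexHull ℝ ({A, B, C} : Set (EuclideanSpace ℝ (Fin 2))) ∩ closedBall A ρ) := by
  classical
  -- distinctness
  have hBA : B ≠ A := by
    rintro rfl
    apply hcol
    rw [Set.insert_idem]
    exact collinear_pair ℝ B C
  have hCA : C ≠ A := by
    rintro rfl
    apply hcol
    have : ({C, B, C} : Set (EuclideanSpace ℝ (Fin 2))) = {C, B} := by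
      ext x; simp; tauto
    rw [this]
    exact collinear_pair ℝ C B
  set e : EuclideanSpace ℝ (Fin 2) ≃ₗᵢ[ℝ] ℂ := Complex.orthonormalBasisOneI.repr.symm with he_def
  set u : ℂ := e B - e A with hu_def
  set v : ℂ := e C - e A with hv_def
  have hu : u ≠ 0 := sub_ne_zero.2 (fun h => hBA (e.injective h))
  have habsu : 0 < ‖u‖ := norm_pos_iff.mpr hu
  have hD : 0 < u.re * u.re + u.im * u.im := by
    have := Complex.normSq_pos.2 hu
    rwa [Complex.normSq_apply] at this
  have hcross : u.re * v.im - u.im * v.re ≠ 0 := by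
    intro h0
    set s : ℝ := (u.re * v.re + u.im * v.im) / (u.re * u.re + u.im * u.im) with hs_def
    have hv' : v = (s : ℝ) * u := by
      apply Complex.ext
      · simp only [Complex.mul_re, Complex.ofReal_re, Complex.ofReal_im, zero_mul, sub_zero]
        rw [hs_def, div_mul_eq_mul_div, eq_comm, div_eq_iff hD.ne']
        linear_combination u.im * h0
      · simp only [Complex.mul_im, Complex.ofReal_re, Complex.ofReal_im, zero_mul, add_zero]
        rw [hs_def, div_mul_eq_mul_div, eq_comm, div_eq_iff hD.ne']
        linear_combination (-u.re) * h0
    have hvc : C - A = s • (B - A) := by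
      apply e.injective
      rw [map_sub, _root_.map_smul, map_sub]
      rw [← hu_def, ← hv_def, hv', Complex.real_smul]
    have hC : C = AffineMap.lineMap A B s := by
      rw [AffineMap.lineMap_apply_module]
      have : C = s • B - s • A + A := by
        rw [← smul_sub]
        rw [sub_eq_iff_eq_add] at hvc
        exact hvc
      rw [this, sub_smul, one_smul]
      abel
    apply hcol
    have hmem : C ∈ line[ℝ, A, B] := by
      rw [hC]; exact AffineMap.lineMap_mem_affineSpan_pair s A B
    have := collinear_insert_of_mem_affineSpan_pair hmem
    have hset : (insert C {A, B} : Set (EuclideanSpace ℝ (Fin 2))) = {A, B, C} := by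
      ext x; simp; tauto
    rwa [hset] at this
  set w : ℂ := (starRingEnd ℂ) u / ((‖u‖ : ℝ) : ℂ) with hw_def
  have hwabs : ‖w‖ = 1 := by
    rw [hw_def, norm_div, Complex.norm_conj, Complex.norm_real, Real.norm_eq_abs, abs_of_pos habsu,
      div_self habsu.ne']
  have hwu : w * u = ((‖u‖ : ℝ) : ℂ) := by
    have hne : ((‖u‖ : ℝ) : ℂ) ≠ 0 := by exact_mod_cast habsu.ne'
    rw [hw_def, div_mul_eq_mul_div, mul_comm, Complex.mul_conj, Complex.normSq_eq_norm_sq]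
    push_cast
    rw [pow_two, mul_div_assoc, div_self hne, mul_one]
  have hwv_im : (w * v).im = (u.re * v.im - u.im * v.re) / ‖u‖ := by
    have h1 : w * v = (((‖u‖)⁻¹ : ℝ) : ℂ) * ((starRingEnd ℂ) u * v) := by
      rw [hw_def]; push_cast; ring
    rw [h1]
    simp only [Complex.mul_im, Complex.ofReal_re, Complex.ofReal_im, zero_mul, add_zero,
      Complex.conj_re, Complex.conj_im]
    field_simp
    ring
  have hwvne : (w * v).im ≠ 0 := by
    rw [hwv_im]
    exact div_ne_zero hcross habsu.ne'
  obtain ⟨m, hmu, hmv⟩ : ∃ m : ℂ ≃ₗᵢ[ℝ] ℂ,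
      m u = ((‖u‖ : ℝ) : ℂ) ∧ 0 < (m v).im := by
    have hwmem : w ∈ Submonoid.unitSphere ℂ := by
      show w ∈ Metric.sphere (0:ℂ) 1
      rw [mem_sphere_zero_iff_norm, hwabs]
    by_cases him0 : 0 < (w * v).im
    · exact ⟨rotation ⟨w, hwmem⟩, by show w * u = _; exact_mod_cast hwu, by
        show 0 < (w * v).im; exact_mod_cast him0⟩
    · refine ⟨(rotation ⟨w, hwmem⟩).trans Complex.conjLIE, ?_, ?_⟩
      · show (starRingEnd ℂ) (w * u) = _
        rw [hwu, Complex.conj_ofReal]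
      · show 0 < ((starRingEnd ℂ) (w * v)).im
        rw [Complex.conj_im]
        have : (w * v).im < 0 := lt_of_le_of_ne (not_lt.1 him0) hwvne
        linarith
  set pr : ℝ := ‖u‖ with hpr_def
  set c : ℂ := m v with hc_def
  have hc : 0 < c.im := hmv
  set g : EuclideanSpace ℝ (Fin 2) → ℂ := fun x => m (e x - e A) with hg_def
  set L : EuclideanSpace ℝ (Fin 2) →ₗ[ℝ] ℂ :=
    (m.toLinearEquiv.toLinearMap).comp (e.toLinearEquiv.toLinearMap) with hL_def
  have hgaff : ∀ x, g x = L (x -ᵥ A) +ᵥ g A := by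
    intro x
    simp only [hg_def, hL_def, LinearMap.comp_apply, LinearIsometryEquiv.coe_toLinearEquiv,
      LinearEquiv.coe_coe, vsub_eq_sub, vadd_eq_add, map_sub, sub_self, map_zero, add_zero]
  set gaff : EuclideanSpace ℝ (Fin 2) →ᵃ[ℝ] ℂ := AffineMap.mk' g L A hgaff with hgaff_def
  have hgaff_coe : ∀ x, gaff x = g x := fun x => rfl
  have hgA : g A = 0 := by simp [hg_def]
  have hgB : g B = ((pr : ℝ) : ℂ) := by rw [hg_def]; exact hmu
  have hgC : g C = c := rfl
  have hgdist : ∀ x y, dist (g x) (g y) = dist x y := by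
    intro x y
    rw [dist_eq_norm, dist_eq_norm, hg_def]
    show ‖m (e x - e A) - m (e y - e A)‖ = _
    rw [← map_sub m, m.norm_map]
    have : e x - e A - (e y - e A) = e (x - y) := by rw [map_sub]; abel
    rw [this, e.norm_map]
  set ginv : ℂ → EuclideanSpace ℝ (Fin 2) := fun z => e.symm (m.symm z + e A) with hginv_def
  have hgl : Function.LeftInverse ginv g := by
    intro x
    simp [hginv_def, hg_def]
  have hgr : Function.RightInverse ginv g := by
    intro z
    simp [hginv_def, hg_def]
  have hMP : MeasurePreserving ginv volume volume :=
    (e.symm.measurePreserving.comp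
      ((measurePreserving_add_right volume (e A)).comp m.symm.measurePreserving))
  have hvol_img : ∀ s : Set (EuclideanSpace ℝ (Fin 2)), MeasurableSet s →
      volume (g '' s) = volume s := by
    intro s hs
    rw [Set.image_eq_preimage_of_inverse hgl hgr]
    exact hMP.measure_preimage hs.nullMeasurableSet
  set T : Set (EuclideanSpace ℝ (Fin 2)) := convexHull ℝ {A, B, C} with hT_def
  have hTmeas : MeasurableSet T := by
    have : IsCompact T := by
      apply Set.Finite.isCompact_convexHull
      exact (Set.finite_singleton C).insert B |>.insert A
    exact this.isClosed.measurableSet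
  have himgT : g '' T = convexHull ℝ {0, ((pr:ℝ):ℂ), c} := by
    have h1 : g '' T = gaff '' T := rfl
    rw [h1, hT_def, AffineMap.image_convexHull]
    congr 1
    rw [Set.image_insert_eq, Set.image_insert_eq, Set.image_singleton]
    rw [hgaff_coe A, hgaff_coe B, hgaff_coe C, hgA, hgB, hgC]
  have himgBall : g '' closedBall A ρ = closedBall 0 ρ := by
    rw [Set.image_eq_preimage_of_inverse hgl hgr]
    ext z
    simp only [Set.mem_preimage, mem_closedBall]
    rw [← hgdist (ginv z) A, hgr z, hgA]
  have hH : ∀ t : ℝ, 0 ≤ t → t ≤ 1 → ρ ≤ ‖(1-t) * ((pr:ℝ):ℂ) + t * c‖ := by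
    intro t ht0 ht1
    have hP : (AffineMap.lineMap B C t : EuclideanSpace ℝ (Fin 2)) ∈
        (affineSpan ℝ ({B, C} : Set (EuclideanSpace ℝ (Fin 2))) : Set _) :=
      AffineMap.lineMap_mem_affineSpan_pair t B C
    have h1 : g (AffineMap.lineMap B C t) = (1-t) * ((pr:ℝ):ℂ) + t * c := by
      rw [← hgaff_coe, AffineMap.apply_lineMap, AffineMap.lineMap_apply_module]
      rw [hgaff_coe B, hgaff_coe C, hgB, hgC, Complex.real_smul, Complex.real_smul]
      push_cast
      ring
    have h2 : ‖(1-t) * ((pr:ℝ):ℂ) + t * c‖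
        = dist (AffineMap.lineMap B C t : EuclideanSpace ℝ (Fin 2)) A := by
      rw [← h1, ← hgdist _ A, hgA, Complex.dist_eq, sub_zero]
    rw [h2]
    rw [dist_comm]
    exact halt _ hP
  have hsec1 : secSet ρ c ⊆ g '' (T ∩ closedBall A ρ) := by
    rw [Set.image_inter hgl.injective, himgT, himgBall]
    intro z hz
    refine ⟨secSet_subset ρ pr hρ habsu c hc hH hz, ?_⟩
    rw [mem_closedBall, Complex.dist_eq, sub_zero]
    exact hz.1
  have hangle : EuclideanGeometry.angle B A C = Real.arccos (c.re / ‖c‖) := by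
    have hdef : EuclideanGeometry.angle B A C
        = InnerProductGeometry.angle (B -ᵥ A) (C -ᵥ A) := rfl
    rw [hdef]
    unfold InnerProductGeometry.angle
    have hvs1 : (B -ᵥ A : EuclideanSpace ℝ (Fin 2)) = B - A := rfl
    have hvs2 : (C -ᵥ A : EuclideanSpace ℝ (Fin 2)) = C - A := rfl
    have hin : (inner ℝ (B -ᵥ A) (C -ᵥ A) : ℝ) = pr * c.re := by
      rw [hvs1, hvs2]
      rw [← e.inner_map_map, map_sub, map_sub, ← hu_def, ← hv_def]
      rw [← m.inner_map_map, hmu, ← hc_def]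
      rw [Complex.inner, Complex.conj_ofReal]
      simp [Complex.mul_re, mul_comm]
    have hn1 : ‖(B -ᵥ A : EuclideanSpace ℝ (Fin 2))‖ = pr := by
      rw [hvs1]
      rw [← e.norm_map, map_sub, ← hu_def]
    have hn2 : ‖(C -ᵥ A : EuclideanSpace ℝ (Fin 2))‖ = ‖c‖ := by
      rw [hvs2]
      rw [← e.norm_map, map_sub, ← hv_def]
      rw [← m.norm_map, ← hc_def]
    rw [hin, hn1, hn2]
    congr 1
    rw [mul_div_mul_left _ _ habsu.ne']
  calc ENNReal.ofReal (EuclideanGeometry.angle B A C * ρ^2 / 2)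
      = ENNReal.ofReal (Real.arccos (c.re / ‖c‖) * ρ^2 / 2) := by rw [hangle]
    _ ≤ volume (secSet ρ c) := secSet_volume ρ hρ c hc
    _ ≤ volume (g '' (T ∩ closedBall A ρ)) := measure_mono hsec1
    _ = volume (T ∩ closedBall A ρ) :=
        hvol_img _ (hTmeas.inter measurableSet_closedBall)



end AuxSector

/-- If three discs with pairwise disjoint interiors are centered at the vertices of a
triangle, each radius at least `ρ > 0`, and each vertex is at distance at least the
radius of its disc from the line through the other two vertices, then the area of the
triangle is at least `(1/2)πρ²`. -/
theorem triangle_area_ge_half_small_disc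
    (A B C : EuclideanSpace ℝ (Fin 2))
    (hABC : AffineIndependent ℝ ![A, B, C])
    (rA rB rC ρ : ℝ) (hρ : 0 < ρ)
    (hrA : ρ ≤ rA) (hrB : ρ ≤ rB) (hrC : ρ ≤ rC)
    (hAB : Disjoint (interior (closedBall A rA)) (interior (closedBall B rB)))
    (hAC : Disjoint (interior (closedBall A rA)) (interior (closedBall C rC)))
    (hBC : Disjoint (interior (closedBall B rB)) (interior (closedBall C rC)))
    (haltA : rA ≤ infDist A (affineSpan ℝ {B, C} : Set (EuclideanSpace ℝ (Fin 2))))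
    (haltB : rB ≤ infDist B (affineSpan ℝ {A, C} : Set (EuclideanSpace ℝ (Fin 2))))
    (haltC : rC ≤ infDist C (affineSpan ℝ {A, B} : Set (EuclideanSpace ℝ (Fin 2)))) :
    ENNReal.ofReal (π * ρ ^ 2 / 2) ≤ volume (convexHull ℝ {A, B, C}) := by
  classical
  have hcol : ¬Collinear ℝ ({A, B, C} : Set (EuclideanSpace ℝ (Fin 2))) :=
    affineIndependent_iff_not_collinear_set.1 hABC
  -- distances between centers
  have hd : ∀ (X Y : EuclideanSpace ℝ (Fin 2)) (rX rY : ℝ), ρ ≤ rX → ρ ≤ rY →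
      Disjoint (interior (closedBall X rX)) (interior (closedBall Y rY)) →
      rX + rY ≤ dist X Y := by
    intro X Y rX rY hX hY hdisj
    rw [interior_closedBall X (lt_of_lt_of_le hρ hX).ne',
      interior_closedBall Y (lt_of_lt_of_le hρ hY).ne'] at hdisj
    by_contra hlt
    push_neg at hlt
    have hrX0 : 0 < rX := lt_of_lt_of_le hρ hX
    have hrY0 : 0 < rY := lt_of_lt_of_le hρ hY
    have hsum : 0 < rX + rY := by linarith
    set t : ℝ := rX / (rX + rY) with ht_def
    have ht0 : 0 < t := div_pos hrX0 hsum
    have ht1 : t < 1 := by rw [ht_def, div_lt_one hsum]; linarith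
    set P := AffineMap.lineMap X Y t with hP_def
    have hPX : dist P X < rX := by
      rw [hP_def, dist_lineMap_left]
      have : ‖t‖ * dist X Y < t * (rX + rY) := by
        rw [Real.norm_eq_abs, abs_of_pos ht0]
        exact mul_lt_mul_of_pos_left hlt ht0
      rw [ht_def] at this ⊢
      calc |rX / (rX + rY)| * dist X Y < rX / (rX + rY) * (rX + rY) := by
            rw [abs_of_pos (div_pos hrX0 hsum)]
            exact mul_lt_mul_of_pos_left hlt (div_pos hrX0 hsum)
        _ = rX := by field_simp
    have hPY : dist P Y < rY := by
      rw [hP_def, dist_lineMap_right]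
      calc ‖1 - t‖ * dist X Y < (1 - t) * (rX + rY) := by
            rw [Real.norm_eq_abs, abs_of_pos (by linarith)]
            exact mul_lt_mul_of_pos_left hlt (by linarith)
        _ = rY := by rw [ht_def]; field_simp; ring
    exact Set.disjoint_left.1 hdisj (mem_ball.2 hPX) (mem_ball.2 hPY)
  have dAB : rA + rB ≤ dist A B := hd A B rA rB hrA hrB hAB
  have dAC : rA + rC ≤ dist A C := hd A C rA rC hrA hrC hAC
  have dBC : rB + rC ≤ dist B C := hd B C rB rC hrB hrC hBC
  -- altitude hypotheses in pointwise form
  have haltA' : ∀ P ∈ (affineSpan ℝ ({B, C} : Set (EuclideanSpace ℝ (Fin 2))) : Set _),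
      ρ ≤ dist A P := fun P hP =>
    le_trans (le_trans hrA haltA) (infDist_le_dist_of_mem hP)
  have haltB' : ∀ P ∈ (affineSpan ℝ ({A, C} : Set (EuclideanSpace ℝ (Fin 2))) : Set _),
      ρ ≤ dist B P := fun P hP =>
    le_trans (le_trans hrB haltB) (infDist_le_dist_of_mem hP)
  have haltC' : ∀ P ∈ (affineSpan ℝ ({A, B} : Set (EuclideanSpace ℝ (Fin 2))) : Set _),
      ρ ≤ dist C P := fun P hP =>
    le_trans (le_trans hrC haltC) (infDist_le_dist_of_mem hP)
  set T : Set (EuclideanSpace ℝ (Fin 2)) := convexHull ℝ {A, B, C} with hT_def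
  have hTmeas : MeasurableSet T := by
    have : IsCompact T := by
      apply Set.Finite.isCompact_convexHull
      exact (Set.finite_singleton C).insert B |>.insert A
    exact this.isClosed.measurableSet
  set SA := T ∩ closedBall A ρ with hSA_def
  set SB := T ∩ closedBall B ρ with hSB_def
  set SC := T ∩ closedBall C ρ with hSC_def
  have hSAm : MeasurableSet SA := hTmeas.inter measurableSet_closedBall
  have hSBm : MeasurableSet SB := hTmeas.inter measurableSet_closedBall
  have hSCm : MeasurableSet SC := hTmeas.inter measurableSet_closedBall
  -- pairwise a.e. disjointness
  have hkey2 : ∀ (X Y : EuclideanSpace ℝ (Fin 2)) (rX rY : ℝ), ρ ≤ rX → ρ ≤ rY →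
      rX + rY ≤ dist X Y → volume (closedBall X ρ ∩ closedBall Y ρ) = 0 := by
    intro X Y rX rY hX hY hdist
    have hsub : closedBall X ρ ∩ closedBall Y ρ ⊆ Metric.sphere X ρ := by
      rintro x ⟨h1, h2⟩
      rw [mem_closedBall] at h1 h2
      rw [Metric.mem_sphere]
      have htri := dist_triangle X x Y
      have h1' : dist X x = dist x X := dist_comm X x
      have hd2 : 2 * ρ ≤ dist X Y := by linarith
      linarith [htri, h1', h1, h2, hd2]
    exact measure_mono_null hsub (Measure.addHaar_sphere volume X ρ)
  have hdisjAB : volume (SA ∩ SB) = 0 := by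
    apply measure_mono_null (Set.inter_subset_inter
      Set.inter_subset_right Set.inter_subset_right)
    exact hkey2 A B rA rB hrA hrB dAB
  have hdisjAC : volume (SA ∩ SC) = 0 := by
    apply measure_mono_null (Set.inter_subset_inter
      Set.inter_subset_right Set.inter_subset_right)
    exact hkey2 A C rA rC hrA hrC dAC
  have hdisjBC : volume (SB ∩ SC) = 0 := by
    apply measure_mono_null (Set.inter_subset_inter
      Set.inter_subset_right Set.inter_subset_right)
    exact hkey2 B C rB rC hrB hrC dBC
  -- per-vertex sector bounds
  have vA : ENNReal.ofReal (∠ B A C * ρ^2 / 2) ≤ volume SA :=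
    vertex_sector_bound A B C hcol ρ hρ haltA'
  have vB : ENNReal.ofReal (∠ A B C * ρ^2 / 2) ≤ volume SB := by
    have hcolB : ¬Collinear ℝ ({B, A, C} : Set (EuclideanSpace ℝ (Fin 2))) := by
      rw [Set.insert_comm]; exact hcol
    have := vertex_sector_bound B A C hcolB ρ hρ haltB'
    rwa [Set.insert_comm B A {C}] at this
  have vC : ENNReal.ofReal (∠ A C B * ρ^2 / 2) ≤ volume SC := by
    have hset : ({C, A, B} : Set (EuclideanSpace ℝ (Fin 2))) = {A, B, C} := by
      ext x; simp; tauto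
    have hcolC : ¬Collinear ℝ ({C, A, B} : Set (EuclideanSpace ℝ (Fin 2))) := by
      rw [hset]; exact hcol
    have := vertex_sector_bound C A B hcolC ρ hρ haltC'
    rwa [hset] at this
  -- angle sum
  have hACne : A ≠ C := hABC.injective.ne (show (0 : Fin 3) ≠ 2 by decide)
  have hBCne : B ≠ C := hABC.injective.ne (show (1 : Fin 3) ≠ 2 by decide)
  have hACne' : A ≠ C := by simpa using hACne
  have hBCne' : B ≠ C := by simpa using hBCne
  have hsum : ∠ B A C + ∠ A B C + ∠ A C B = π := by
    have h := EuclideanGeometry.angle_add_angle_add_angle_eq_pi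
      (p₁ := C) (p₂ := A) B hACne'
    rw [EuclideanGeometry.angle_comm B A C, EuclideanGeometry.angle_comm A C B]
    linarith [h]
  -- assemble
  have hUsub : SA ∪ (SB ∪ SC) ⊆ T := by
    apply Set.union_subset Set.inter_subset_left
    exact Set.union_subset Set.inter_subset_left Set.inter_subset_left
  have aeAB : AEDisjoint volume SA SB := hdisjAB
  have aeAC : AEDisjoint volume SA SC := hdisjAC
  have aeBC : AEDisjoint volume SB SC := hdisjBC
  have hunion : volume (SA ∪ (SB ∪ SC)) = volume SA + volume SB + volume SC := by
    rw [measure_union₀ (hSBm.union hSCm).nullMeasurableSet (aeAB.union_right aeAC),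
      measure_union₀ hSCm.nullMeasurableSet aeBC, add_assoc]
  have hfinal : ENNReal.ofReal (π * ρ ^ 2 / 2)
      ≤ volume SA + volume SB + volume SC := by
    have h1 : 0 ≤ ∠ B A C * ρ^2 / 2 := by
      have := EuclideanGeometry.angle_nonneg B A C; positivity
    have h2 : 0 ≤ ∠ A B C * ρ^2 / 2 := by
      have := EuclideanGeometry.angle_nonneg A B C; positivity
    have h3 : 0 ≤ ∠ A C B * ρ^2 / 2 := by
      have := EuclideanGeometry.angle_nonneg A C B; positivity
    have : π * ρ ^ 2 / 2 = ∠ B A C * ρ^2 / 2 + ∠ A B C * ρ^2 / 2 + ∠ A C B * ρ^2 / 2 := by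
      rw [← hsum]; ring
    rw [this, ENNReal.ofReal_add (by linarith) h3, ENNReal.ofReal_add h1 h2]
    exact add_le_add (add_le_add vA vB) vC
  calc ENNReal.ofReal (π * ρ ^ 2 / 2) ≤ volume SA + volume SB + volume SC := hfinal
    _ = volume (SA ∪ (SB ∪ SC)) := hunion.symm
    _ ≤ volume T := measure_mono hUsub
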